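/- Let γ ∈ (0,1] and let 0 < a ≤ b be real numbers. Then (ln(1+1/a))^γ − (ln(1+1/b))^γ ≤ (ln(1+(b−a)/a))^γ. -/

import Mathlib

open Real Set NNReal

lemma rpow_sub_rpow_le {x y p : ℝ} (hy : 0 ≤ y) (hxy : y ≤ x) (hp : 0 < p)
    (hp1 : p ≤ 1) : x ^ p - y ^ p ≤ (x - y) ^ p := by
  have hx : 0 ≤ x := hy.trans hxy
  have h := NNReal.rpow_add_le_add_rpow y.toNNReal (x - y).toNNReal hp.le hp1
  have hcoe : ((y.toNNReal + (x - y).toNNReal : ℝ≥0) : ℝ) = x := by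
    push_cast
    rw [Real.coe_toNNReal _ hy, Real.coe_toNNReal _ (by linarith)]
    ring
  have h' : x ^ p ≤ y ^ p + (x - y) ^ p := by
    have := (NNReal.coe_le_coe).2 h
    push_cast at this
    rw [Real.coe_toNNReal _ hy, Real.coe_toNNReal _ (show (0:ℝ) ≤ x - y by linarith),
      add_sub_cancel] at this
    exact this
  linarith

theorem theta_difference_bound (γ a b : ℝ) (hγ : γ ∈ Set.Ioc (0:ℝ) 1)
    (ha : 0 < a) (hab : a ≤ b) :
    (Real.log (1 + 1/a)) ^ γ - (Real.log (1 + 1/b)) ^ γ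
      ≤ (Real.log (1 + (b - a)/a)) ^ γ := by
  obtain ⟨hγ0, hγ1⟩ := hγ
  have hb : 0 < b := ha.trans_le hab
  set x := Real.log (1 + 1/a)
  set y := Real.log (1 + 1/b)
  have hy : 0 ≤ y := Real.log_nonneg (le_add_of_nonneg_right (by positivity))
  have hxy : y ≤ x := by
    apply Real.log_le_log (by positivity)
    have : 1/b ≤ 1/a := one_div_le_one_div_of_le ha hab
    linarith
  have key : x ^ γ - y ^ γ ≤ (x - y) ^ γ := rpow_sub_rpow_le hy hxy hγ0 hγ1
  refine key.trans (Real.rpow_le_rpow (by linarith) ?_ hγ0.le)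
  -- x - y = log((1+1/a)/(1+1/b)) ≤ log(b/a) = log(1+(b-a)/a)
  have h1 : x - y = Real.log ((1 + 1/a) / (1 + 1/b)) := by
    rw [Real.log_div (by positivity) (by positivity)]
  rw [h1]
  apply Real.log_le_log (by positivity)
  have hba : 1 + (b - a)/a = b/a := by field_simp; ring
  rw [hba]
  rw [div_le_div_iff₀ (by positivity) (by positivity)]
  have h2 : (1 + 1/a) * a = a + 1 := by field_simp
  have h3 : (1 + 1/b) * b = b + 1 := by field_simp
  calc (1 + 1/a) * a = a + 1 := h2
    _ ≤ b + 1 := by linarith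
    _ = (1 + 1/b) * b := h3.symm
    _ = b * (1 + 1/b) := mul_comm _ _
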